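/- Assume for each positive integer L and each zero-average 2πL-periodic holomorphic g with ‖g‖_ρ < ∞ and each ω ∈ Ω_γ, there is for each δ>0 a 2πL-periodic solution f of Df(ω)=g with ‖f‖_{ρ−δ} ≤ (k_n L^{2n+1}/(γδ^{2n}))‖g‖_ρ. Let g ∈ C_{ρ,ℚ} with zero constant Pontryagin coefficient, ω ∈ Ω_γ, and suppose there is a divisibility-increasing cofinal sequence S = (n_i) with ‖g‖_{ρ,S,n} < ∞. Then for every δ>0 there exists f ∈ C_{ρ−δ,ℚ} solving Df(ω) = g with ‖f‖_{ρ−δ} ≤ (k_n/(γδ^{2n})) ‖g‖_{ρ,S,n}. -/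

import Mathlib

noncomputable section

open MeasureTheory Filter Topology

/-- The strip `{z ∈ ℂⁿ : ‖Im z‖ < ρ}`. -/
def strip (n : ℕ) (ρ : ℝ) : Set (Fin n → ℂ) := {z | ‖(fun i => (z i).im : Fin n → ℝ)‖ < ρ}

/-- `f` is `2πL`-periodic in each real variable. -/
def IsPeriodicL (n : ℕ) (L : ℝ) (f : (Fin n → ℂ) → ℂ) : Prop :=
  ∀ (z : Fin n → ℂ) (i : Fin n),
    f (Function.update z i (z i + ((2 * Real.pi * L : ℝ) : ℂ))) = f z

/-- `g` has zero average with respect to the real variables over a period box. -/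
def ZeroAvg (n : ℕ) (L : ℝ) (g : (Fin n → ℂ) → ℂ) : Prop :=
  ∫ x in Set.univ.pi (fun _ : Fin n => Set.Icc (0 : ℝ) (2 * Real.pi * L)),
    g (fun i => ((x i : ℝ) : ℂ)) = 0

/-- `f` solves the diophantine equation `Df(ω) = g` on `S`. -/
def SolvesDiophantine (n : ℕ) (ω : Fin n → ℝ) (f g : (Fin n → ℂ) → ℂ)
    (S : Set (Fin n → ℂ)) : Prop :=
  ∀ z ∈ S, deriv (fun t : ℂ => f (fun i => z i + t * ((ω i : ℝ) : ℂ))) 0 = g z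

/-- The set `Ω_γ` of diophantine vectors with constant `γ`. -/
def DiophSet (n : ℕ) (γ : ℝ) : Set (Fin n → ℝ) :=
  {ω | ∀ k : Fin n → ℤ, k ≠ 0 →
    γ / ‖(fun i => (k i : ℝ) : Fin n → ℝ)‖ ^ n < |∑ i, ω i * (k i : ℝ)|}

/-- `‖g‖_ρ`, the supremum of `|g|` over the strip. -/
def supOn (n : ℕ) (ρ : ℝ) (g : (Fin n → ℂ) → ℂ) : ℝ :=
  sSup ((fun z => ‖g z‖) '' strip n ρ)

section Helpers

open Set

lemma strip_isOpen (n : ℕ) (ρ : ℝ) : IsOpen (strip n ρ) := by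
  have hc : Continuous fun z : Fin n → ℂ => ‖(fun i => (z i).im : Fin n → ℝ)‖ :=
    (continuous_pi fun i => Complex.continuous_im.comp (continuous_apply i)).norm
  exact isOpen_lt hc continuous_const

lemma strip_mono {n : ℕ} {ρ ρ' : ℝ} (h : ρ' ≤ ρ) : strip n ρ' ⊆ strip n ρ :=
  fun _ hz => lt_of_lt_of_le hz h

lemma coe_mem_strip {n : ℕ} {ρ : ℝ} (hρ : 0 < ρ) (x : Fin n → ℝ) :
    (fun i => ((x i : ℝ) : ℂ)) ∈ strip n ρ := by
  have : (fun i => (((x i : ℝ) : ℂ)).im : Fin n → ℝ) = 0 := by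
    funext i; simp
  simp only [strip, Set.mem_setOf_eq, this, norm_zero]
  exact hρ

lemma norm_im_le {n : ℕ} (w x : Fin n → ℂ) :
    ‖(fun i => (w i).im : Fin n → ℝ)‖ ≤ ‖(fun i => (x i).im : Fin n → ℝ)‖ + ‖w - x‖ := by
  rw [pi_norm_le_iff_of_nonneg (add_nonneg (norm_nonneg _) (norm_nonneg _))]
  intro i
  have h1 : (w i).im = (x i).im + (w i - x i).im := by simp
  have h2 : |(x i).im| ≤ ‖(fun i => (x i).im : Fin n → ℝ)‖ := by
    simpa using norm_le_pi_norm (fun i => (x i).im : Fin n → ℝ) i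
  have h3 : |(w i - x i).im| ≤ ‖w - x‖ := by
    refine (Complex.abs_im_le_norm _).trans ?_
    simpa using norm_le_pi_norm (w - x) i
  calc ‖(w i).im‖ = |(x i).im + (w i - x i).im| := by rw [← h1]; rfl
    _ ≤ |(x i).im| + |(w i - x i).im| := abs_add_le _ _
    _ ≤ _ := add_le_add h2 h3

lemma IsPeriodicL.of_dvd {n L L' : ℕ} {f : (Fin n → ℂ) → ℂ}
    (hf : IsPeriodicL n L f) (h : L ∣ L') : IsPeriodicL n L' f := by
  obtain ⟨d, rfl⟩ := h
  have key : ∀ d : ℕ, ∀ (z : Fin n → ℂ) (i : Fin n),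
      f (Function.update z i (z i + ((2 * Real.pi * ((L * d : ℕ) : ℝ) : ℝ) : ℂ))) = f z := by
    intro d
    induction d with
    | zero => intro z i; simp
    | succ d ih =>
      intro z i
      have h1 : Function.update z i (z i + ((2 * Real.pi * ((L * (d+1) : ℕ) : ℝ) : ℝ) : ℂ))
          = Function.update (Function.update z i (z i + ((2 * Real.pi * ((L * d : ℕ) : ℝ) : ℝ) : ℂ))) i
            ((Function.update z i (z i + ((2 * Real.pi * ((L * d : ℕ) : ℝ) : ℝ) : ℂ))) i
              + ((2 * Real.pi * (L : ℝ) : ℝ) : ℂ)) := by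
        rw [Function.update_self, Function.update_idem]
        congr 1
        push_cast; ring
      rw [h1, hf, ih]
  intro z i
  exact key d z i

lemma isPeriodicL_sum {n L : ℕ} {F : ℕ → (Fin n → ℂ) → ℂ} {s : Finset ℕ}
    (h : ∀ i ∈ s, IsPeriodicL n L (F i)) :
    IsPeriodicL n L (fun z => ∑ i ∈ s, F i z) := fun z j =>
  Finset.sum_congr rfl fun i hi => h i hi z j

lemma norm_fderiv_le_of_bound {m : ℕ} {U : Set (Fin m → ℂ)} (hU : IsOpen U)
    {ψ : (Fin m → ℂ) → ℂ} (hψ : DifferentiableOn ℂ ψ U) (x : Fin m → ℂ) {r M : ℝ}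
    (hr : 0 < r) (hsub : ∀ w : Fin m → ℂ, ‖w - x‖ ≤ r → w ∈ U)
    (hM : ∀ w ∈ U, ‖ψ w‖ ≤ M) :
    ‖fderiv ℂ ψ x‖ ≤ M / r := by
  have hxU : x ∈ U := hsub x (by simp [hr.le])
  have hM0 : 0 ≤ M := (norm_nonneg _).trans (hM x hxU)
  refine ContinuousLinearMap.opNorm_le_bound _ (div_nonneg hM0 hr.le) fun v => ?_
  rcases eq_or_ne v 0 with rfl | hv
  · simp
  have hv0 : 0 < ‖v‖ := norm_pos_iff.mpr hv
  set r' : ℝ := r / ‖v‖ with hr'def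
  have hr' : 0 < r' := div_pos hr hv0
  set φ : ℂ → ℂ := fun t => ψ (x + t • v) with hφ
  have hline : Differentiable ℂ (fun t : ℂ => x + t • v) :=
    (differentiable_id.smul_const v).const_add x
  set U' : Set ℂ := (fun t : ℂ => x + t • v) ⁻¹' U with hU'
  have hU'o : IsOpen U' := hU.preimage hline.continuous
  have hφd : DifferentiableOn ℂ φ U' := hψ.comp hline.differentiableOn (fun t ht => ht)
  have hdist : ∀ t : ℂ, ‖(x + t • v) - x‖ = ‖t‖ * ‖v‖ := by
    intro t; rw [add_sub_cancel_left, norm_smul]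
  have hball : Metric.closedBall (0:ℂ) r' ⊆ U' := by
    intro t ht
    simp only [Metric.mem_closedBall, dist_zero_right] at ht
    refine hsub _ ?_
    rw [hdist]
    calc ‖t‖ * ‖v‖ ≤ r' * ‖v‖ := by gcongr
      _ = r := by rw [hr'def]; field_simp
  have hder : HasDerivAt φ (fderiv ℂ ψ x v) 0 := by
    have h1 : HasDerivAt (fun t : ℂ => x + t • v) v 0 := by
      have := ((hasDerivAt_id (0:ℂ)).smul_const v).const_add x
      rwa [one_smul] at this
    have h2 : HasFDerivAt ψ (fderiv ℂ ψ x) (x + (0:ℂ) • v) := by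
      simpa using (hψ.differentiableAt (hU.mem_nhds hxU)).hasFDerivAt
    exact h2.comp_hasDerivAt 0 h1
  have hcd : Complex.cderiv r' φ 0 = deriv φ 0 := Complex.cderiv_eq_deriv hU'o hφd hr' hball
  have hb : ‖Complex.cderiv r' φ 0‖ ≤ M / r' := by
    refine Complex.norm_cderiv_le hr' fun w hw => ?_
    simp only [mem_sphere_iff_norm, sub_zero] at hw
    refine hM _ (hsub _ ?_)
    rw [hdist, hw, hr'def]
    exact (div_mul_cancel₀ _ hv0.ne').le
  have hfin : ‖fderiv ℂ ψ x v‖ ≤ M / r' := by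
    rw [← hder.deriv, ← hcd]; exact hb
  refine hfin.trans (le_of_eq ?_)
  rw [hr'def]
  field_simp

lemma continuous_restrict_real {n : ℕ} {ρ : ℝ} (hρ : 0 < ρ) {f : (Fin n → ℂ) → ℂ}
    (hf : DifferentiableOn ℂ f (strip n ρ)) :
    Continuous fun x : Fin n → ℝ => f (fun i => (x i : ℂ)) := by
  rw [continuous_iff_continuousAt]
  intro x
  have hcoe : Continuous fun x : Fin n → ℝ => (fun i => ((x i : ℝ) : ℂ)) :=
    continuous_pi fun i => Complex.continuous_ofReal.comp (continuous_apply i)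
  exact (hf.continuousOn.continuousAt
    ((strip_isOpen n ρ).mem_nhds (coe_mem_strip hρ x))).comp hcoe.continuousAt

lemma periodic_shift {n L : ℕ} {g : (Fin n → ℂ) → ℂ} (hper : IsPeriodicL n L g) :
    ∀ (k : Fin n → ℕ) (x : Fin n → ℝ),
      g (fun i => ((x i + k i * (2 * Real.pi * L) : ℝ) : ℂ)) = g (fun i => ((x i : ℝ) : ℂ)) := by
  have key : ∀ (N : ℕ) (k : Fin n → ℕ), (∑ j, k j) = N → ∀ x : Fin n → ℝ,
      g (fun i => ((x i + k i * (2 * Real.pi * L) : ℝ) : ℂ)) = g (fun i => ((x i : ℝ) : ℂ)) := by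
    intro N
    induction N with
    | zero =>
      intro k hk x
      have : ∀ j, k j = 0 := by
        intro j
        exact Finset.sum_eq_zero_iff.mp hk j (Finset.mem_univ j)
      simp [this]
    | succ N ih =>
      intro k hk x
      have hex : ∃ j, k j ≠ 0 := by
        by_contra h
        push_neg at h
        simp [h] at hk
      obtain ⟨j, hj⟩ := hex
      set k' : Fin n → ℕ := Function.update k j (k j - 1) with hk'
      have hs1 : ∑ i, k' i = (k j - 1) + ∑ i ∈ Finset.univ \ {j}, k i := by
        rw [hk', Finset.sum_update_of_mem (Finset.mem_univ j)]
      have hs2 : ∑ i, k i = k j + ∑ i ∈ Finset.univ \ {j}, k i := by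
        conv_lhs => rw [← Function.update_eq_self j k]
        rw [Finset.sum_update_of_mem (Finset.mem_univ j)]
      have hsum' : (∑ i, k' i) = N := by omega
      have heq : (fun i => ((x i + k i * (2 * Real.pi * L) : ℝ) : ℂ))
          = Function.update (fun i => ((x i + k' i * (2 * Real.pi * L) : ℝ) : ℂ)) j
            (((x j + k' j * (2 * Real.pi * L) : ℝ) : ℂ) + ((2 * Real.pi * (L:ℝ) : ℝ) : ℂ)) := by
        funext i
        rcases eq_or_ne i j with rfl | hij
        · rw [Function.update_self]
          have hki : (k' i : ℂ) = (k i : ℂ) - 1 := by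
            rw [hk', Function.update_self, Nat.cast_sub (Nat.one_le_iff_ne_zero.mpr hj)]
            simp
          push_cast
          rw [hki]
          ring
        · rw [Function.update_of_ne hij]
          have : k' i = k i := by rw [hk', Function.update_of_ne hij]
          rw [this]
      rw [heq]
      exact (hper _ j).trans (ih k' hsum' x)
  intro k x
  exact key (∑ j, k j) k rfl x

lemma oneD_Ico {T : ℝ} (hT : 0 < T) {m : ℕ} {y : ℝ} (hy : y ∈ Ico (0:ℝ) (m * T)) :
    ∃ a : Fin m, y ∈ Ico (((a : ℕ) : ℝ) * T) (((a : ℕ) : ℝ) * T + T) := by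
  have h0 : 0 ≤ y / T := div_nonneg hy.1 hT.le
  have hfl : (⌊y / T⌋₊ : ℝ) ≤ y / T := Nat.floor_le h0
  have hlt : y / T < m := (div_lt_iff₀ hT).mpr hy.2
  have ham : ⌊y / T⌋₊ < m := (Nat.floor_lt h0).mpr hlt
  refine ⟨⟨⌊y / T⌋₊, ham⟩, ?_, ?_⟩
  · have := mul_le_mul_of_nonneg_right hfl hT.le
    rwa [div_mul_cancel₀ _ hT.ne'] at this
  · have h2 : y / T < (⌊y / T⌋₊ : ℝ) + 1 := Nat.lt_floor_add_one _
    have := mul_lt_mul_of_pos_right h2 hT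
    rw [div_mul_cancel₀ _ hT.ne'] at this
    calc y < ((⌊y / T⌋₊ : ℝ) + 1) * T := this
      _ = (⌊y / T⌋₊ : ℝ) * T + T := by ring

lemma Ico_nat_disjoint {T : ℝ} (hT : 0 < T) {a b : ℕ} (hab : a ≠ b) :
    Disjoint (Ico ((a:ℝ)*T) ((a:ℝ)*T+T)) (Ico ((b:ℝ)*T) ((b:ℝ)*T+T)) := by
  rw [Set.disjoint_left]
  rintro y ⟨h1, h2⟩ ⟨h3, h4⟩
  rcases Nat.lt_or_ge a b with h | h
  · have : ((a:ℝ) + 1) ≤ b := by exact_mod_cast h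
    nlinarith
  · have hba : b < a := lt_of_le_of_ne h (Ne.symm hab)
    have : ((b:ℝ) + 1) ≤ a := by exact_mod_cast hba
    nlinarith

lemma zeroAvg_of_dvd {n L L' : ℕ} (hL : 0 < L) (hL' : 0 < L') (hdvd : L ∣ L')
    {g : (Fin n → ℂ) → ℂ}
    (hc : Continuous fun x : Fin n → ℝ => g (fun i => ((x i : ℝ) : ℂ)))
    (hper : IsPeriodicL n L g) (havg : ZeroAvg n L g) : ZeroAvg n L' g := by
  obtain ⟨m, rfl⟩ := hdvd
  unfold ZeroAvg at havg ⊢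
  have hm : 0 < m := Nat.pos_of_ne_zero (by rintro rfl; simp at hL')
  set T : ℝ := 2 * Real.pi * L with hTdef
  have hT : 0 < T := by
    have := Real.pi_pos
    have hLpos : (0:ℝ) < L := by exact_mod_cast hL
    positivity
  set h : (Fin n → ℝ) → ℂ := fun x => g (fun i => ((x i : ℝ) : ℂ)) with hhdef
  have hbox : 2 * Real.pi * ((L * m : ℕ) : ℝ) = m * T := by push_cast; ring
  have hIntIcc : ∀ a b : ℝ, IntegrableOn h (univ.pi fun _ : Fin n => Icc a b) :=
    fun a b => hc.continuousOn.integrableOn_compact (isCompact_univ_pi fun _ => isCompact_Icc)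
  set Box : (Fin n → Fin m) → Set (Fin n → ℝ) :=
    fun k => univ.pi fun j => Ico (((k j : ℕ) : ℝ) * T) (((k j : ℕ) : ℝ) * T + T) with hBox
  have hBoxMeas : ∀ k, MeasurableSet (Box k) :=
    fun k => MeasurableSet.univ_pi fun j => measurableSet_Ico
  have hBoxSub : ∀ k, Box k ⊆ univ.pi fun _ : Fin n => Icc (0:ℝ) (m * T) := by
    intro k x hx j _
    have hj := hx j (mem_univ j)
    simp only [mem_Ico] at hj
    have hk1 : ((k j : ℕ) : ℝ) + 1 ≤ m := by exact_mod_cast (k j).2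
    constructor
    · have : (0:ℝ) ≤ ((k j : ℕ) : ℝ) * T := by positivity
      linarith [hj.1]
    · nlinarith [hj.2]
  have hBoxInt : ∀ k, IntegrableOn h (Box k) :=
    fun k => (hIntIcc 0 (m * T)).mono_set (hBoxSub k)
  have hBoxDisj : Pairwise (Function.onFun Disjoint Box) := by
    intro k k' hkk'
    have : ∃ j, k j ≠ k' j := by
      by_contra hcon
      push_neg at hcon
      exact hkk' (funext hcon)
    obtain ⟨j, hj⟩ := this
    rw [Function.onFun, Set.disjoint_left]
    intro x hx hx'
    have h1 := hx j (mem_univ j)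
    have h2 := hx' j (mem_univ j)
    have hd := Ico_nat_disjoint hT (a := (k j : ℕ)) (b := (k' j : ℕ))
      (fun hcc => hj (Fin.ext hcc))
    exact Set.disjoint_left.mp hd h1 h2
  have hdecomp : (univ.pi fun _ : Fin n => Ico (0:ℝ) (m * T)) = ⋃ k : Fin n → Fin m, Box k := by
    ext x
    simp only [Set.mem_pi, Set.mem_univ, forall_true_left, Set.mem_iUnion, hBox, mem_Ico]
    constructor
    · intro hx
      choose a ha using fun j => oneD_Ico hT (hx j)
      exact ⟨a, fun j => ha j⟩
    · rintro ⟨k, hk⟩ j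
      have hkj := hk j
      have hk1 : ((k j : ℕ) : ℝ) + 1 ≤ m := by exact_mod_cast (k j).2
      have hpos : (0:ℝ) ≤ ((k j : ℕ) : ℝ) * T := by positivity
      constructor
      · linarith [hkj.1]
      · nlinarith [hkj.2]
  have hpiece : ∀ k : Fin n → Fin m,
      ∫ x in Box k, h x = ∫ x in univ.pi fun _ : Fin n => Ico (0:ℝ) T, h x := by
    intro k
    set c : Fin n → ℝ := fun j => ((k j : ℕ) : ℝ) * T with hcdef
    have hmp : MeasurePreserving (fun x : Fin n → ℝ => x + c) volume volume :=
      measurePreserving_add_right volume c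
    have hemb : MeasurableEmbedding (fun x : Fin n → ℝ => x + c) :=
      (MeasurableEquiv.addRight c).measurableEmbedding
    have hpre : (fun x : Fin n → ℝ => x + c) ⁻¹' Box k
        = univ.pi fun _ : Fin n => Ico (0:ℝ) T := by
      ext x
      simp only [Set.mem_preimage, hBox, Set.mem_pi, Set.mem_univ, forall_true_left,
        Pi.add_apply, mem_Ico, hcdef]
      constructor
      · intro hx j
        have := hx j
        constructor <;> linarith [this.1, this.2]
      · intro hx j
        have := hx j
        constructor <;> linarith [this.1, this.2]
    have key := hmp.setIntegral_preimage_emb hemb h (Box k)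
    rw [hpre] at key
    have hhx : (fun x : Fin n → ℝ => h (x + c)) = h := by
      funext x
      have := periodic_shift hper (fun j => (k j : ℕ)) x
      simpa [hhdef, hcdef, hTdef] using this
    rw [← key, hhx]
  have hIcoIcc : ∀ b : ℝ, ∫ x in univ.pi (fun _ : Fin n => Ico (0:ℝ) b), h x
      = ∫ x in univ.pi (fun _ : Fin n => Icc (0:ℝ) b), h x := by
    intro b
    apply setIntegral_congr_set
    rw [MeasureTheory.volume_pi, Set.pi_univ_Icc]
    exact MeasureTheory.Measure.univ_pi_Ico_ae_eq_Icc
  have hexp : ∀ k, ∫ x in Box k, h x = 0 := by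
    intro k
    rw [hpiece k, hIcoIcc T]
    exact havg
  rw [hbox, ← hIcoIcc (m * T), hdecomp,
    integral_iUnion_fintype hBoxMeas hBoxDisj hBoxInt]
  simp [hexp]

end Helpers

set_option maxHeartbeats 2000000 in
/-- Solenoidal diophantine equation: assuming the periodic solvability theorem with
the rescaled bound `k_n L^{2n+1}/(γδ^{2n})`, a limit periodic `g` with zero constant
Pontryagin coefficient, truncations `gs i = g_{n_i}` along a divisibility-cofinal
sequence, and finite norm `‖g‖_{ρ,S,n}`, admits for every `δ > 0` a limit periodic
solution `f ∈ C_{ρ−δ,ℚ}` of `Df(ω) = g` with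
`‖f‖_{ρ−δ} ≤ (k_n/(γδ^{2n})) ‖g‖_{ρ,S,n}`. -/
theorem stmt6 (n : ℕ) (ρ γ kn : ℝ) (hρ : 0 < ρ) (hγ : 0 < γ)
    (H : ∀ L : ℕ, 0 < L → ∀ g : (Fin n → ℂ) → ℂ, ∀ ω ∈ DiophSet n γ,
      DifferentiableOn ℂ g (strip n ρ) → IsPeriodicL n L g → ZeroAvg n L g →
      BddAbove ((fun z => ‖g z‖) '' strip n ρ) →
      ∀ δ : ℝ, 0 < δ → ∃ f : (Fin n → ℂ) → ℂ,
        DifferentiableOn ℂ f (strip n (ρ - δ)) ∧ IsPeriodicL n L f ∧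
        SolvesDiophantine n ω f g (strip n (ρ - δ)) ∧
        ∀ z ∈ strip n (ρ - δ),
          ‖f z‖ ≤ kn * (L : ℝ) ^ (2 * n + 1) / (γ * δ ^ (2 * n)) * supOn n ρ g)
    (ω : Fin n → ℝ) (hω : ω ∈ DiophSet n γ)
    (nseq : ℕ → ℕ) (hmono : StrictMono nseq) (hpos : ∀ i, 0 < nseq i)
    (hdvd : ∀ i, nseq i ∣ nseq (i + 1))
    (g : (Fin n → ℂ) → ℂ) (gs : ℕ → (Fin n → ℂ) → ℂ)
    (hgdiff : DifferentiableOn ℂ g (strip n ρ))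
    (hgbdd : BddAbove ((fun z => ‖g z‖) '' strip n ρ))
    (hgsdiff : ∀ i, DifferentiableOn ℂ (gs i) (strip n ρ))
    (hgsper : ∀ i, IsPeriodicL n (nseq i) (gs i))
    (hgszero : ∀ i, ZeroAvg n (nseq i) (gs i))
    (hgsbdd : ∀ i, BddAbove ((fun z => ‖gs i z‖) '' strip n ρ))
    (hconv : TendstoUniformlyOn gs g atTop (strip n ρ))
    (hsum : Summable (fun i : ℕ => (nseq (i + 1) : ℝ) ^ (2 * n + 1)
        * supOn n ρ (gs (i + 1) - gs i))) :
    ∀ δ : ℝ, 0 < δ → ∃ f : (Fin n → ℂ) → ℂ,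
      DifferentiableOn ℂ f (strip n (ρ - δ)) ∧
      (∀ ε : ℝ, 0 < ε → ∃ L : ℕ, 0 < L ∧ ∃ h : (Fin n → ℂ) → ℂ,
        IsPeriodicL n L h ∧ ∀ z ∈ strip n (ρ - δ), ‖f z - h z‖ ≤ ε) ∧
      SolvesDiophantine n ω f g (strip n (ρ - δ)) ∧
      ∀ z ∈ strip n (ρ - δ),
        ‖f z‖ ≤ kn / (γ * δ ^ (2 * n)) *
          ((nseq 0 : ℝ) ^ (2 * n + 1) * supOn n ρ (gs 0)
            + ∑' i : ℕ, (nseq (i + 1) : ℝ) ^ (2 * n + 1)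
                * supOn n ρ (gs (i + 1) - gs i)) := by
  intro δ hδ
  classical
  rcases le_or_gt ρ δ with hρδ | hρδ
  · -- the target strip is empty: everything is vacuous
    have hemp : strip n (ρ - δ) = ∅ := by
      ext z
      simp only [strip, Set.mem_setOf_eq, Set.mem_empty_iff_false, iff_false, not_lt]
      have h0 : ρ - δ ≤ 0 := by linarith
      exact h0.trans (norm_nonneg _)
    refine ⟨0, ?_, ?_, ?_, ?_⟩
    · intro z hz
      rw [hemp] at hz
      exact absurd hz (Set.notMem_empty z)
    · intro ε hε
      refine ⟨1, one_pos, 0, fun z i => rfl, ?_⟩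
      intro z hz
      rw [hemp] at hz
      exact absurd hz (Set.notMem_empty z)
    · intro z hz
      rw [hemp] at hz
      exact absurd hz (Set.notMem_empty z)
    · intro z hz
      rw [hemp] at hz
      exact absurd hz (Set.notMem_empty z)
  · -- main case
    have hσ : 0 < ρ - δ := by linarith
    have hsubsetρ : strip n (ρ - δ) ⊆ strip n ρ := strip_mono (by linarith)
    have hopen := strip_isOpen n (ρ - δ)
    -- the data of the periodic problems
    have Hdiff : ∀ i : ℕ, DifferentiableOn ℂ (gs (i+1) - gs i) (strip n ρ) :=
      fun i => (hgsdiff (i+1)).sub (hgsdiff i)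
    have Hper : ∀ i : ℕ, IsPeriodicL n (nseq (i+1)) (gs (i+1) - gs i) := by
      intro i z j
      have h1 := hgsper (i+1) z j
      have h2 := (IsPeriodicL.of_dvd (hgsper i) (hdvd i)) z j
      simp only [Pi.sub_apply, h1, h2]
    have Hcont : ∀ i : ℕ, Continuous fun x : Fin n → ℝ => gs i (fun j => ((x j : ℝ) : ℂ)) :=
      fun i => continuous_restrict_real hρ (hgsdiff i)
    have Hzero : ∀ i : ℕ, ZeroAvg n (nseq (i+1)) (gs (i+1) - gs i) := by
      intro i
      have hz1 : ZeroAvg n (nseq (i+1)) (gs (i+1)) := hgszero (i+1)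
      have hz2 : ZeroAvg n (nseq (i+1)) (gs i) :=
        zeroAvg_of_dvd (hpos i) (hpos (i+1)) (hdvd i) (Hcont i) (hgsper i) (hgszero i)
      unfold ZeroAvg at hz1 hz2 ⊢
      have hInt : ∀ m : ℕ, IntegrableOn (fun x : Fin n → ℝ => gs m (fun j => ((x j : ℝ) : ℂ)))
          (Set.univ.pi fun _ : Fin n => Set.Icc (0:ℝ) (2*Real.pi*((nseq (i+1) : ℕ) : ℝ))) :=
        fun m => (Hcont m).continuousOn.integrableOn_compact
          (isCompact_univ_pi fun _ => isCompact_Icc)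
      simp only [Pi.sub_apply]
      rw [integral_sub (hInt (i+1)) (hInt i), hz1, hz2, sub_zero]
    have Hbdd : ∀ i : ℕ, BddAbove ((fun z => ‖(gs (i+1) - gs i) z‖) '' strip n ρ) := by
      intro i
      obtain ⟨M1, hM1⟩ := hgsbdd (i+1)
      obtain ⟨M2, hM2⟩ := hgsbdd i
      refine ⟨M1 + M2, ?_⟩
      rintro y ⟨z, hz, rfl⟩
      have h1 : ‖gs (i+1) z‖ ≤ M1 := hM1 (Set.mem_image_of_mem _ hz)
      have h2 : ‖gs i z‖ ≤ M2 := hM2 (Set.mem_image_of_mem _ hz)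
      simp only [Pi.sub_apply]
      calc ‖gs (i+1) z - gs i z‖
          ≤ ‖gs (i+1) z‖ + ‖gs i z‖ := by
            simpa using norm_sub_le (gs (i+1) z) (gs i z)
        _ ≤ M1 + M2 := add_le_add h1 h2
    -- solutions of the periodic problems
    have HS0 := H (nseq 0) (hpos 0) (gs 0) ω hω (hgsdiff 0) (hgsper 0) (hgszero 0)
      (hgsbdd 0) δ hδ
    have HS : ∀ i : ℕ, ∃ f0 : (Fin n → ℂ) → ℂ,
        DifferentiableOn ℂ f0 (strip n (ρ - δ)) ∧ IsPeriodicL n (nseq (i+1)) f0 ∧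
        SolvesDiophantine n ω f0 (gs (i+1) - gs i) (strip n (ρ - δ)) ∧
        ∀ z ∈ strip n (ρ - δ),
          ‖f0 z‖ ≤ kn * (nseq (i+1) : ℝ)^(2*n+1)/(γ*δ^(2*n))
            * supOn n ρ (gs (i+1) - gs i) :=
      fun i => H (nseq (i+1)) (hpos (i+1)) _ ω hω (Hdiff i) (Hper i) (Hzero i) (Hbdd i) δ hδ
    obtain ⟨F, B, hFdiff, hFper, hFsol0, hFsolS, hFbd, hBsum, hB0, hBS⟩ :
        ∃ (F : ℕ → (Fin n → ℂ) → ℂ) (B : ℕ → ℝ),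
          (∀ i, DifferentiableOn ℂ (F i) (strip n (ρ - δ))) ∧
          (∀ i, IsPeriodicL n (nseq i) (F i)) ∧
          SolvesDiophantine n ω (F 0) (gs 0) (strip n (ρ - δ)) ∧
          (∀ i, SolvesDiophantine n ω (F (i+1)) (gs (i+1) - gs i) (strip n (ρ - δ))) ∧
          (∀ i, ∀ z ∈ strip n (ρ - δ),
            ‖F i z‖ ≤ kn / (γ * δ^(2*n)) * B i) ∧
          Summable B ∧
          B 0 = (nseq 0 : ℝ)^(2*n+1) * supOn n ρ (gs 0) ∧
          (∀ i, B (i+1) = (nseq (i+1) : ℝ)^(2*n+1) * supOn n ρ (gs (i+1) - gs i)) := by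
      refine ⟨fun i => Nat.rec HS0.choose (fun j _ => (HS j).choose) i,
        fun i => Nat.rec ((nseq 0 : ℝ)^(2*n+1) * supOn n ρ (gs 0))
          (fun j _ => (nseq (j+1) : ℝ)^(2*n+1) * supOn n ρ (gs (j+1) - gs j)) i,
        ?_, ?_, HS0.choose_spec.2.2.1, fun i => (HS i).choose_spec.2.2.1, ?_, ?_, rfl, fun i => rfl⟩
      · intro i
        cases i with
        | zero => exact HS0.choose_spec.1
        | succ j => exact (HS j).choose_spec.1
      · intro i
        cases i with
        | zero => exact HS0.choose_spec.2.1
        | succ j => exact (HS j).choose_spec.2.1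
      · intro i z hz
        cases i with
        | zero =>
          refine (HS0.choose_spec.2.2.2 z hz).trans (le_of_eq ?_)
          show kn * (nseq 0 : ℝ)^(2*n+1)/(γ*δ^(2*n)) * supOn n ρ (gs 0)
              = kn / (γ*δ^(2*n)) * ((nseq 0 : ℝ)^(2*n+1) * supOn n ρ (gs 0))
          ring
        | succ j =>
          refine ((HS j).choose_spec.2.2.2 z hz).trans (le_of_eq ?_)
          show kn * (nseq (j+1) : ℝ)^(2*n+1)/(γ*δ^(2*n)) * supOn n ρ (gs (j+1) - gs j)
              = kn / (γ*δ^(2*n)) * ((nseq (j+1) : ℝ)^(2*n+1) * supOn n ρ (gs (j+1) - gs j))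
          ring
      · have h1 : Summable (fun j : ℕ =>
            (nseq (j+1) : ℝ)^(2*n+1) * supOn n ρ (gs (j+1) - gs j)) := hsum
        exact (summable_nat_add_iff 1).mp h1
    -- the bound sequence
    have hCsum : Summable (fun i => kn / (γ * δ^(2*n)) * B i) := hBsum.mul_left _
    have hFbd' : ∀ i, ∀ z ∈ strip n (ρ - δ), ‖F i z‖ ≤ kn / (γ * δ^(2*n)) * B i := by
      intro i z hz
      exact hFbd i z hz
    have hFzsum : ∀ z ∈ strip n (ρ - δ), Summable (fun i => F i z) := by
      intro z hz
      exact Summable.of_norm_bounded hCsum (fun i => hFbd' i z hz)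
    -- part 1 : differentiability of the sum
    have hdiff : DifferentiableOn ℂ (fun z => ∑' i, F i z) (strip n (ρ - δ)) := by
      intro z₀ hz₀
      have hz₀' : ‖(fun i => (z₀ i).im : Fin n → ℝ)‖ < ρ - δ := hz₀
      set r : ℝ := (ρ - δ - ‖(fun i => (z₀ i).im : Fin n → ℝ)‖) / 4 with hrdef
      have hr : 0 < r := by rw [hrdef]; linarith
      have hball : ∀ x ∈ Metric.ball z₀ r, ∀ w : Fin n → ℂ, ‖w - x‖ ≤ r → w ∈ strip n (ρ - δ) := by
        intro x hx w hw
        rw [Metric.mem_ball, dist_eq_norm] at hx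
        show ‖(fun i => (w i).im : Fin n → ℝ)‖ < ρ - δ
        have h1 := norm_im_le w x
        have h2 := norm_im_le x z₀
        have hrr : r * 4 = ρ - δ - ‖(fun i => (z₀ i).im : Fin n → ℝ)‖ := by
          rw [hrdef]; ring
        linarith
      have hsmem : Metric.ball z₀ r ⊆ strip n (ρ - δ) := fun x hx => hball x hx x (by simp [hr.le])
      have hfd : ∀ (i : ℕ), ∀ x ∈ Metric.ball z₀ r,
          ‖fderiv ℂ (F i) x‖ ≤ (kn / (γ * δ^(2*n)) * B i) / r := by
        intro i x hx
        exact norm_fderiv_le_of_bound hopen (hFdiff i) x hr (fun w hw => hball x hx w hw)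
          (fun w hwU => hFbd' i w hwU)
      have hCr : Summable (fun i => (kn / (γ * δ^(2*n)) * B i) / r) := hCsum.div_const r
      have hTU : TendstoUniformlyOn
          (fun (s : Finset ℕ) x => ∑ i ∈ s, fderiv ℂ (F i) x)
          (fun x => ∑' i, fderiv ℂ (F i) x) atTop (Metric.ball z₀ r) :=
        tendstoUniformlyOn_tsum hCr (fun i x hx => hfd i x hx)
      have hHD : ∀ (s : Finset ℕ), ∀ x ∈ Metric.ball z₀ r,
          HasFDerivAt (fun y => ∑ i ∈ s, F i y) (∑ i ∈ s, fderiv ℂ (F i) x) x := by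
        intro s x hx
        refine HasFDerivAt.fun_sum fun i _ => ?_
        exact ((hFdiff i).differentiableAt (hopen.mem_nhds (hsmem hx))).hasFDerivAt
      have hpt : ∀ x ∈ Metric.ball z₀ r,
          Tendsto (fun s : Finset ℕ => ∑ i ∈ s, F i x) atTop (𝓝 (∑' i, F i x)) :=
        fun x hx => (hFzsum x (hsmem hx)).hasSum
      have := hasFDerivAt_of_tendstoUniformlyOn Metric.isOpen_ball hTU hHD hpt
        (Metric.mem_ball_self hr)
      exact this.differentiableAt.differentiableWithinAt
    -- part 2 : limit periodicity
    have happrox : ∀ ε : ℝ, 0 < ε → ∃ L : ℕ, 0 < L ∧ ∃ h : (Fin n → ℂ) → ℂ,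
        IsPeriodicL n L h ∧ ∀ z ∈ strip n (ρ - δ),
          ‖(fun z => ∑' i, F i z) z - h z‖ ≤ ε := by
      intro ε hε
      have htail : Tendsto (fun N => ∑' i, (kn / (γ * δ^(2*n)) * B (i + N))) atTop (𝓝 0) :=
        tendsto_sum_nat_add (fun i => kn / (γ * δ^(2*n)) * B i)
      obtain ⟨N, hN⟩ := (htail.eventually (gt_mem_nhds hε)).exists
      have hdvd_le : ∀ i j : ℕ, i ≤ j → nseq i ∣ nseq j := by
        intro i j hij
        induction j, hij using Nat.le_induction with
        | base => exact dvd_rfl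
        | succ k hk ih => exact ih.trans (hdvd k)
      refine ⟨nseq N, hpos N, fun z => ∑ i ∈ Finset.range N, F i z, ?_, ?_⟩
      · apply isPeriodicL_sum
        intro i hi
        exact (hFper i).of_dvd (hdvd_le i N (le_of_lt (Finset.mem_range.mp hi)))
      · intro z hz
        have hsz := hFzsum z hz
        have hszN : Summable (fun i => F (i + N) z) :=
          (summable_nat_add_iff N).mpr hsz
        have key := Summable.sum_add_tsum_nat_add (f := fun i => F i z) N hsz
        have hfz : (∑' i, F i z) - ∑ i ∈ Finset.range N, F i z = ∑' i, F (i + N) z := by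
          rw [← key]; ring
        have hCN : Summable (fun i => kn / (γ * δ^(2*n)) * B (i + N)) :=
          (summable_nat_add_iff N).mpr hCsum
        have habs : ‖∑' i, F (i + N) z‖ ≤ ∑' i, (kn / (γ * δ^(2*n)) * B (i + N)) :=
          tsum_of_norm_bounded hCN.hasSum (fun i => hFbd' (i + N) z hz)
        calc ‖(∑' i, F i z) - ∑ i ∈ Finset.range N, F i z‖
            = ‖∑' i, F (i + N) z‖ := by rw [hfz]
          _ ≤ ∑' i, (kn / (γ * δ^(2*n)) * B (i + N)) := habs
          _ ≤ ε := hN.le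
    -- part 3 : solving the equation
    have hsol : SolvesDiophantine n ω (fun z => ∑' i, F i z) g (strip n (ρ - δ)) := by
      intro z hz
      have hz' : ‖(fun i => (z i).im : Fin n → ℝ)‖ < ρ - δ := hz
      have hω1 : (0:ℝ) < ‖ω‖ + 1 := by positivity
      set r : ℝ := (ρ - δ - ‖(fun i => (z i).im : Fin n → ℝ)‖) / (‖ω‖ + 1) with hrdef
      have hr : 0 < r := div_pos (by linarith) hω1
      have hmap : ∀ t ∈ Metric.ball (0:ℂ) r,
          (fun i => z i + t * ((ω i : ℝ) : ℂ)) ∈ strip n (ρ - δ) := by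
        intro t ht
        rw [Metric.mem_ball, dist_zero_right] at ht
        show ‖(fun i => (z i + t * ((ω i : ℝ) : ℂ)).im : Fin n → ℝ)‖ < ρ - δ
        have hBnn : 0 ≤ ‖(fun i => (z i).im : Fin n → ℝ)‖ + ‖t‖ * (‖ω‖ + 1) := by positivity
        have hble : ‖(fun i => (z i + t * ((ω i : ℝ) : ℂ)).im : Fin n → ℝ)‖
            ≤ ‖(fun i => (z i).im : Fin n → ℝ)‖ + ‖t‖ * (‖ω‖ + 1) := by
          rw [pi_norm_le_iff_of_nonneg hBnn]
          intro i
          have h1 : (z i + t * ((ω i : ℝ) : ℂ)).im = (z i).im + t.im * ω i := by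
            simp [Complex.add_im, Complex.mul_im]
          have h2 : |(z i).im| ≤ ‖(fun i => (z i).im : Fin n → ℝ)‖ := by
            simpa using norm_le_pi_norm (fun i => (z i).im : Fin n → ℝ) i
          have h3 : |t.im| ≤ ‖t‖ := by
            exact Complex.abs_im_le_norm t
          have h4 : |ω i| ≤ ‖ω‖ := by
            simpa using norm_le_pi_norm ω i
          have h5 : |t.im * ω i| ≤ ‖t‖ * ‖ω‖ := by
            rw [abs_mul]
            exact mul_le_mul h3 h4 (abs_nonneg _) (norm_nonneg _)
          have h6 : ‖t‖ * ‖ω‖ ≤ ‖t‖ * (‖ω‖ + 1) := by nlinarith [norm_nonneg t]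
          calc ‖(z i + t * ((ω i : ℝ) : ℂ)).im‖
              = |(z i).im + t.im * ω i| := by rw [h1]; rfl
            _ ≤ |(z i).im| + |t.im * ω i| := abs_add_le _ _
            _ ≤ _ := by linarith
        have hlt : ‖t‖ * (‖ω‖ + 1) < r * (‖ω‖ + 1) := by
          exact mul_lt_mul_of_pos_right ht hω1
        have hreq : r * (‖ω‖ + 1) = ρ - δ - ‖(fun i => (z i).im : Fin n → ℝ)‖ := by
          rw [hrdef]; field_simp
        linarith
      have hlinediff : Differentiable ℂ (fun t : ℂ => (fun i => z i + t * ((ω i : ℝ) : ℂ))) := by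
        rw [differentiable_pi]
        intro i
        exact (differentiable_id.mul_const _).const_add (z i)
      have hΦd : ∀ s : Finset ℕ, DifferentiableOn ℂ
          (fun t : ℂ => ∑ i ∈ s, F i (fun j => z j + t * ((ω j : ℝ) : ℂ)))
          (Metric.ball (0:ℂ) r) := by
        intro s
        apply DifferentiableOn.fun_sum
        intro i _
        exact (hFdiff i).comp hlinediff.differentiableOn (fun t ht => hmap t ht)
      have hTU2 : TendstoUniformlyOn
          (fun (s : Finset ℕ) (t : ℂ) => ∑ i ∈ s, F i (fun j => z j + t * ((ω j : ℝ) : ℂ)))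
          (fun t : ℂ => ∑' i, F i (fun j => z j + t * ((ω j : ℝ) : ℂ))) atTop
          (Metric.ball (0:ℂ) r) :=
        tendstoUniformlyOn_tsum hCsum (fun i t ht => hFbd' i _ (hmap t ht))
      have hderivTL := (hTU2.tendstoLocallyUniformlyOn).deriv
        (Eventually.of_forall hΦd) Metric.isOpen_ball
      have h0mem : (0:ℂ) ∈ Metric.ball (0:ℂ) r := Metric.mem_ball_self hr
      have hAt := hderivTL.tendsto_at h0mem
      have hds : ∀ s : Finset ℕ,
          deriv (fun t : ℂ => ∑ i ∈ s, F i (fun j => z j + t * ((ω j : ℝ) : ℂ))) 0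
            = ∑ i ∈ s, deriv (fun t : ℂ => F i (fun j => z j + t * ((ω j : ℝ) : ℂ))) 0 := by
        intro s
        apply deriv_fun_sum
        intro i _
        have hdA : DifferentiableOn ℂ (fun t : ℂ => F i (fun j => z j + t * ((ω j : ℝ) : ℂ)))
            (Metric.ball (0:ℂ) r) :=
          (hFdiff i).comp hlinediff.differentiableOn (fun t ht => hmap t ht)
        exact hdA.differentiableAt (Metric.isOpen_ball.mem_nhds h0mem)
      have hHasSum : HasSum (fun i => deriv (fun t : ℂ => F i (fun j => z j + t * ((ω j : ℝ) : ℂ))) 0)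
          (deriv (fun t : ℂ => ∑' i, F i (fun j => z j + t * ((ω j : ℝ) : ℂ))) 0) :=
        hAt.congr hds
      have hpartial : ∀ N : ℕ, ∑ i ∈ Finset.range (N+1),
          deriv (fun t : ℂ => F i (fun j => z j + t * ((ω j : ℝ) : ℂ))) 0 = gs N z := by
        intro N
        induction N with
        | zero =>
          rw [Finset.sum_range_one]
          exact hFsol0 z hz
        | succ N ih =>
          rw [Finset.sum_range_succ, ih, hFsolS N z hz]
          simp [Pi.sub_apply]
      have hgs_tendsto : Tendsto (fun N => gs N z) atTop (𝓝 (g z)) :=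
        hconv.tendsto_at (hsubsetρ hz)
      have h1 : Tendsto (fun N : ℕ => ∑ i ∈ Finset.range (N+1),
          deriv (fun t : ℂ => F i (fun j => z j + t * ((ω j : ℝ) : ℂ))) 0) atTop
          (𝓝 (deriv (fun t : ℂ => ∑' i, F i (fun j => z j + t * ((ω j : ℝ) : ℂ))) 0)) :=
        hHasSum.tendsto_sum_nat.comp (tendsto_add_atTop_nat 1)
      have h2 : Tendsto (fun N : ℕ => gs N z) atTop
          (𝓝 (deriv (fun t : ℂ => ∑' i, F i (fun j => z j + t * ((ω j : ℝ) : ℂ))) 0)) :=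
        h1.congr hpartial
      exact tendsto_nhds_unique h2 hgs_tendsto
    -- part 4 : the bound
    have hbound : ∀ z ∈ strip n (ρ - δ),
        ‖(fun z => ∑' i, F i z) z‖ ≤ kn / (γ * δ ^ (2 * n)) *
          ((nseq 0 : ℝ) ^ (2 * n + 1) * supOn n ρ (gs 0)
            + ∑' i : ℕ, (nseq (i + 1) : ℝ) ^ (2 * n + 1)
                * supOn n ρ (gs (i + 1) - gs i)) := by
      intro z hz
      have h1 : ‖∑' i, F i z‖ ≤ ∑' i, (kn / (γ * δ^(2*n)) * B i) :=
        tsum_of_norm_bounded hCsum.hasSum (fun i => hFbd' i z hz)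
      have h2 : ∑' i, (kn / (γ * δ^(2*n)) * B i) = kn / (γ * δ^(2*n)) * ∑' i, B i :=
        tsum_mul_left
      have h3 : ∑' i, B i = B 0 + ∑' i, B (i+1) := Summable.tsum_eq_zero_add hBsum
      have h4 : (∑' i, B (i+1)) = ∑' i : ℕ, (nseq (i + 1) : ℝ) ^ (2 * n + 1)
          * supOn n ρ (gs (i + 1) - gs i) := by
        congr 1
        funext i
        exact hBS i
      calc ‖∑' i, F i z‖ = ‖∑' i, F i z‖ := rfl
        _ ≤ ∑' i, (kn / (γ * δ^(2*n)) * B i) := h1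
        _ = kn / (γ * δ^(2*n)) * (B 0 + ∑' i, B (i+1)) := by rw [h2, h3]
        _ = _ := by rw [hB0, h4]
    exact ⟨fun z => ∑' i, F i z, hdiff, happrox, hsol, hbound⟩
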